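/- Let X and Y be real-valued random variables (possibly on different probability spaces, with probability measures P and Q respectively) whose moment generating functions are finite on a common open interval (−ε, ε) around 0 for some ε > 0. If Φ_X(t) = Φ_Y(t) for all t in this interval, then X and Y have the same distribution, i.e. the law of X under P equals the law of Y under Q. -/

import Mathlib

open MeasureTheory ProbabilityTheory Complex Set Metric Filter SchwartzMap
open scoped Real FourierTransform RealInnerProductSpace Topology

namespace MGFUniq
set_option linter.unusedSectionVars false


set_option linter.unusedSectionVars false

variable {μ : Measure ℝ} [IsFiniteMeasure μ] {ε : ℝ}

lemma exp_mul_le (a s b x : ℝ) (has : a ≤ s) (hsb : s ≤ b) :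
    Real.exp (s * x) ≤ Real.exp (a * x) + Real.exp (b * x) := by
  rcases le_total 0 x with hx | hx
  · have : s * x ≤ b * x := mul_le_mul_of_nonneg_right hsb hx
    calc Real.exp (s * x) ≤ Real.exp (b * x) := Real.exp_le_exp.2 this
      _ ≤ _ := le_add_of_nonneg_left (Real.exp_pos _).le
  · have : s * x ≤ a * x := mul_le_mul_of_nonpos_right has hx
    calc Real.exp (s * x) ≤ Real.exp (a * x) := Real.exp_le_exp.2 this
      _ ≤ _ := le_add_of_nonneg_right (Real.exp_pos _).le

lemma abs_mul_exp_le (r s x : ℝ) (hr : 0 < r) :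
    |x| * Real.exp (s * x) ≤ (Real.exp ((s + r) * x) + Real.exp ((s - r) * x)) / r := by
  have h1 : r * |x| ≤ Real.exp (r * x) + Real.exp (-(r * x)) := by
    calc r * |x| = |r * x| := by rw [abs_mul, abs_of_pos hr]
      _ ≤ Real.exp |r * x| := (Real.add_one_le_exp _).trans' (by linarith [abs_nonneg (r*x)])
      _ ≤ Real.exp (r * x) + Real.exp (-(r * x)) := by
          rcases abs_cases (r * x) with ⟨h, _⟩ | ⟨h, _⟩ <;> rw [h]
          · exact le_add_of_nonneg_right (Real.exp_pos _).le
          · exact le_add_of_nonneg_left (Real.exp_pos _).le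
  have h2 : |x| ≤ (Real.exp (r * x) + Real.exp (-(r * x))) / r := by
    rw [le_div_iff₀ hr]; linarith
  calc |x| * Real.exp (s * x)
      ≤ ((Real.exp (r * x) + Real.exp (-(r * x))) / r) * Real.exp (s * x) :=
        mul_le_mul_of_nonneg_right h2 (Real.exp_pos _).le
    _ = (Real.exp ((s + r) * x) + Real.exp ((s - r) * x)) / r := by
        rw [div_mul_eq_mul_div, add_mul, ← Real.exp_add, ← Real.exp_add]
        ring_nf

noncomputable def F (μ : Measure ℝ) (z : ℂ) : ℂ := ∫ x, Complex.exp (z * x) ∂μ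

lemma norm_cexp_mul (z : ℂ) (x : ℝ) : ‖Complex.exp (z * x)‖ = Real.exp (z.re * x) := by
  rw [Complex.norm_exp]
  norm_num [Complex.mul_re]

lemma integrable_cexp (hInt : ∀ t ∈ Ioo (-ε) ε, Integrable (fun x => Real.exp (t * x)) μ)
    {z : ℂ} (hz : z.re ∈ Ioo (-ε) ε) :
    Integrable (fun x : ℝ => Complex.exp (z * x)) μ := by
  refine (hInt z.re hz).mono' ?_ ?_
  · exact (Complex.continuous_exp.comp (by continuity)).aestronglyMeasurable
  · filter_upwards with x
    rw [norm_cexp_mul]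

lemma hasDerivAt_F (hε : 0 < ε)
    (hInt : ∀ t ∈ Ioo (-ε) ε, Integrable (fun x => Real.exp (t * x)) μ)
    {z₀ : ℂ} (hz₀ : z₀.re ∈ Ioo (-ε) ε) :
    HasDerivAt (F μ) (∫ x, Complex.exp (z₀ * x) * x ∂μ) z₀ := by
  obtain ⟨h1, h2⟩ := hz₀
  set t₀ := z₀.re with ht₀
  set r : ℝ := min (ε - t₀) (t₀ + ε) / 4 with hr
  have hminl : min (ε - t₀) (t₀ + ε) ≤ ε - t₀ := min_le_left _ _
  have hminr : min (ε - t₀) (t₀ + ε) ≤ t₀ + ε := min_le_right _ _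
  have hrpos : 0 < r := by
    have : 0 < min (ε - t₀) (t₀ + ε) := lt_min (by linarith) (by linarith)
    positivity
  have hmem : ∀ s : ℝ, |s - t₀| ≤ 2 * r → s ∈ Ioo (-ε) ε := by
    intro s hs
    rcases abs_le.1 hs with ⟨hs1, hs2⟩
    constructor <;> [linarith; linarith]
  set g : ℝ → ℝ := fun x =>
    ((Real.exp ((t₀ + 2*r) * x) + Real.exp (t₀ * x))
      + (Real.exp (t₀ * x) + Real.exp ((t₀ - 2*r) * x))) / r with hg
  have hg_int : Integrable g μ := by
    apply Integrable.div_const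
    exact ((hInt _ (hmem _ (by rw [add_sub_cancel_left, abs_of_pos (by linarith)]))).add
        (hInt _ (hmem _ (by simp [abs_of_nonneg, hrpos.le])))).add
      ((hInt _ (hmem _ (by simp [abs_of_nonneg, hrpos.le]))).add
        (hInt _ (hmem _ (by rw [sub_sub_cancel_left, abs_neg, abs_of_pos (by linarith)]))))
  have key := hasDerivAt_integral_of_dominated_loc_of_deriv_le (F := fun z (x : ℝ) => Complex.exp (z * x))
      (F' := fun z (x : ℝ) => Complex.exp (z * x) * x) (x₀ := z₀) (bound := g) (ball_mem_nhds z₀ hrpos)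
      (Eventually.of_forall fun z =>
        (Complex.continuous_exp.comp (by continuity)).aestronglyMeasurable)
      (integrable_cexp hInt ⟨h1, h2⟩)
      (((Complex.continuous_exp.comp (by continuity)).mul (by continuity)).aestronglyMeasurable)
      ?_ hg_int ?_
  · exact key.2
  · filter_upwards with x z hz
    have hre : |z.re - t₀| < r := by
      calc |z.re - t₀| = |(z - z₀).re| := by simp [Complex.sub_re, ht₀]
        _ ≤ ‖z - z₀‖ := Complex.abs_re_le_norm _
        _ < r := by rwa [mem_ball, Complex.dist_eq] at hz
    have hb1 : Real.exp (z.re * x) ≤ Real.exp ((t₀ - r) * x) + Real.exp ((t₀ + r) * x) := by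
      rcases abs_le.1 hre.le with ⟨ha, hb⟩
      exact exp_mul_le _ _ _ _ (by linarith) (by linarith)
    have : ‖Complex.exp (z * x) * x‖ = Real.exp (z.re * x) * |x| := by
      rw [norm_mul, norm_cexp_mul]
      simp
    rw [this]
    calc Real.exp (z.re * x) * |x|
        ≤ (Real.exp ((t₀ - r) * x) + Real.exp ((t₀ + r) * x)) * |x| :=
          mul_le_mul_of_nonneg_right hb1 (abs_nonneg _)
      _ = |x| * Real.exp ((t₀ + r) * x) + |x| * Real.exp ((t₀ - r) * x) := by ring
      _ ≤ (Real.exp ((t₀ + r + r) * x) + Real.exp ((t₀ + r - r) * x)) / r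
          + (Real.exp ((t₀ - r + r) * x) + Real.exp ((t₀ - r - r) * x)) / r := by
          gcongr <;> exact abs_mul_exp_le r _ x hrpos
      _ = g x := by
          rw [hg, ← add_div]
          ring_nf
  · filter_upwards with x z hz
    simpa using ((hasDerivAt_id z).mul_const (x : ℂ)).cexp



set_option linter.unusedSectionVars false

variable {ν : Measure ℝ} [IsFiniteMeasure ν]


lemma F_ofReal (μ : Measure ℝ) (t : ℝ) :
    F μ (t : ℂ) = ((∫ x, Real.exp (t * x) ∂μ : ℝ) : ℂ) := by
  rw [F]
  calc ∫ x, Complex.exp (↑t * ↑x) ∂μ = ∫ x, ((Real.exp (t * x) : ℝ) : ℂ) ∂μ := by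
        apply integral_congr_ae
        filter_upwards with x
        rw [Complex.ofReal_exp]; norm_cast
    _ = _ := integral_ofReal

lemma charFn_eq (hε : 0 < ε)
    (hIntμ : ∀ t ∈ Ioo (-ε) ε, Integrable (fun x => Real.exp (t * x)) μ)
    (hIntν : ∀ t ∈ Ioo (-ε) ε, Integrable (fun x => Real.exp (t * x)) ν)
    (heq : ∀ t ∈ Ioo (-ε) ε, ∫ x, Real.exp (t * x) ∂μ = ∫ x, Real.exp (t * x) ∂ν)
    (s : ℝ) : F μ (s * I) = F ν (s * I) := by
  set S : Set ℂ := {z : ℂ | z.re ∈ Ioo (-ε) ε} with hSdef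
  have hS_open : IsOpen S := isOpen_Ioo.preimage continuous_re
  have hS_conv : Convex ℝ S := (convex_Ioo (-ε) ε).linear_preimage Complex.reLm
  have hFd : DifferentiableOn ℂ (F μ) S :=
    fun z hz => (hasDerivAt_F hε hIntμ hz).differentiableAt.differentiableWithinAt
  have hGd : DifferentiableOn ℂ (F ν) S :=
    fun z hz => (hasDerivAt_F hε hIntν hz).differentiableAt.differentiableWithinAt
  have hFa : AnalyticOnNhd ℂ (F μ) S := hFd.analyticOnNhd hS_open
  have hGa : AnalyticOnNhd ℂ (F ν) S := hGd.analyticOnNhd hS_open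
  have h0S : (0 : ℂ) ∈ S := by simp [hSdef, hε]
  set u : ℕ → ℝ := fun n => (ε / 2) / (n + 1) with hu
  have hupos : ∀ n, 0 < u n := fun n => by positivity
  have huIoo : ∀ n, u n ∈ Ioo (-ε) ε := by
    intro n
    constructor
    · linarith [hupos n]
    · have : u n ≤ ε / 2 := by
        rw [hu]
        apply div_le_self (by positivity)
        linarith [Nat.cast_nonneg (α := ℝ) n]
      linarith
  have hueq : ∀ n, F μ ((u n : ℝ) : ℂ) = F ν ((u n : ℝ) : ℂ) := by
    intro n
    rw [F_ofReal, F_ofReal, heq _ (huIoo n)]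
  have hutendsto : Tendsto (fun n : ℕ => ((u n : ℝ) : ℂ)) atTop (𝓝[≠] (0 : ℂ)) := by
    apply tendsto_nhdsWithin_of_tendsto_nhds_of_eventually_within
    · have h1 : Tendsto u atTop (𝓝 0) := by
        apply Tendsto.div_atTop (tendsto_const_nhds)
        exact tendsto_atTop_add_const_right _ _ tendsto_natCast_atTop_atTop
      have := (Complex.continuous_ofReal.tendsto 0).comp h1
      exact this
    · filter_upwards with n
      simp only [mem_compl_iff, mem_singleton_iff]
      exact_mod_cast (hupos n).ne'
  have hfreq : ∃ᶠ z in 𝓝[≠] (0 : ℂ), F μ z = F ν z :=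
    hutendsto.frequently (Frequently.of_forall hueq)
  have := hFa.eqOn_of_preconnected_of_frequently_eq hGa hS_conv.isPreconnected h0S hfreq
  apply this
  simp [hSdef, hε]



set_option linter.unusedSectionVars false



lemma norm_circleExp (r : ℝ) : ‖Complex.exp (↑r * I)‖ = 1 := by
  rw [Complex.norm_exp]
  simp

lemma schwartz_integral_eq
    (hchar : ∀ s : ℝ, ∫ x, Complex.exp (↑s * I * ↑x) ∂μ = ∫ x, Complex.exp (↑s * I * ↑x) ∂ν)
    (g : 𝓢(ℝ, ℂ)) : ∫ x, g x ∂μ = ∫ x, g x ∂ν := by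
  set Fg : 𝓢(ℝ, ℂ) := SchwartzMap.fourierTransformCLM ℂ g with hFg
  have hFg_apply : ∀ s, Fg s = 𝓕 (⇑g) s := fun s => rfl
  have hinv : ∀ x : ℝ, g x = 𝓕⁻ (𝓕 ⇑g) x := by
    intro x
    rw [g.continuous.fourierInv_fourier_eq g.integrable Fg.integrable]
  have key : ∀ (ρ : Measure ℝ), IsFiniteMeasure ρ →
      ∫ x, g x ∂ρ = ∫ s, (∫ x, Complex.exp (↑(2 * π * s) * I * ↑x) ∂ρ) • Fg s := by
    intro ρ hρ
    have hswap : ∫ x, g x ∂ρ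
        = ∫ x, ∫ s, Complex.exp (↑(2 * π * (s * x)) * I) • Fg s ∂(volume) ∂ρ := by
      apply integral_congr_ae
      filter_upwards with x
      rw [hinv x, Real.fourierInv_eq']
      apply integral_congr_ae
      filter_upwards with s
      simp only [RCLike.inner_apply, conj_trivial, ← hFg_apply, mul_comm x s]
    rw [hswap]
    have hcont : Continuous (fun p : ℝ × ℝ =>
        Complex.exp (↑(2 * π * (p.2 * p.1)) * I) • Fg p.2) := by
      refine Continuous.smul (f := fun p : ℝ × ℝ => Complex.exp (↑(2 * π * (p.2 * p.1)) * I)) (g := fun p : ℝ × ℝ => Fg p.2) ?_ ?_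
      · apply Complex.continuous_exp.comp
        continuity
      · exact Fg.continuous.comp continuous_snd
    have hintprod : Integrable (Function.uncurry fun (x s : ℝ) =>
        Complex.exp (↑(2 * π * (s * x)) * I) • Fg s) (ρ.prod volume) := by
      refine (integrable_prod_iff hcont.aestronglyMeasurable).2 ⟨?_, ?_⟩
      · filter_upwards with x
        apply (Fg.integrable).bdd_mul
        · exact (Complex.continuous_exp.comp (by continuity)).aestronglyMeasurable
        · exact Eventually.of_forall fun s => le_of_eq (norm_circleExp _)
      · apply Integrable.congr (integrable_const (∫ s, ‖Fg s‖ ∂volume))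
        filter_upwards with x
        rw [← integral_congr_ae]
        filter_upwards with s
        rw [norm_smul, norm_circleExp, one_mul]
    rw [integral_integral_swap hintprod]
    apply integral_congr_ae
    filter_upwards with s
    rw [← integral_smul_const]
    apply integral_congr_ae
    filter_upwards with x
    congr 2
    push_cast
    ring
  rw [key μ ‹_›, key ν ‹_›]
  apply integral_congr_ae
  filter_upwards with s
  rw [hchar (2 * π * s)]



set_option linter.unusedSectionVars false

/-- A smooth compactly supported (complexified) bump function as a Schwartz map. -/
noncomputable def bumpSchwartz {c : ℝ} (f : ContDiffBump c) : SchwartzMap ℝ ℂ where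
  toFun := fun x => (f x : ℂ)
  smooth' := Complex.ofRealCLM.contDiff.comp f.contDiff
  decay' := by
    intro k n
    have hsmooth : ContDiff ℝ ((⊤ : ℕ∞) : WithTop ℕ∞) (fun x : ℝ => (f x : ℂ)) :=
      Complex.ofRealCLM.contDiff.comp f.contDiff
    have hcs : HasCompactSupport (fun x : ℝ => (f x : ℂ)) :=
      f.hasCompactSupport.comp_left (g := fun r : ℝ => (r : ℂ)) (by simp)
    have hcs' : HasCompactSupport
        (fun x : ℝ => ‖x‖ ^ k * ‖iteratedFDeriv ℝ n (fun y : ℝ => (f y : ℂ)) x‖) := by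
      apply HasCompactSupport.mul_left
      apply (hcs.iteratedFDeriv n).norm
    have hcont : Continuous
        (fun x : ℝ => ‖x‖ ^ k * ‖iteratedFDeriv ℝ n (fun y : ℝ => (f y : ℂ)) x‖) := by
      apply Continuous.mul (by continuity)
      exact (hsmooth.continuous_iteratedFDeriv (by exact_mod_cast le_top)).norm
    obtain ⟨C, hC⟩ := hcont.bounded_above_of_compact_support hcs'
    exact ⟨C, fun x => (le_abs_self _).trans ((Real.norm_eq_abs _ ▸ hC x))⟩

lemma bumpSchwartz_apply {c : ℝ} (f : ContDiffBump c) (x : ℝ) :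
    bumpSchwartz f x = (f x : ℂ) := rfl



lemma measure_Ioo_eq
    (hS : ∀ g : SchwartzMap ℝ ℂ, ∫ x, g x ∂μ = ∫ x, g x ∂ν)
    (a b : ℝ) : μ (Ioo a b) = ν (Ioo a b) := by
  rcases le_or_gt b a with hab | hab
  · simp [Ioo_eq_empty_of_le hab]
  · set c : ℝ := (a + b) / 2 with hc
    set R : ℝ := (b - a) / 2 with hR
    have hRpos : 0 < R := by rw [hR]; linarith
    have hball : ball c R = Ioo a b := by
      rw [Real.ball_eq_Ioo]
      congr 1 <;> (rw [hc, hR]; ring)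
    -- bump sequence
    set f : ℕ → ContDiffBump c := fun n =>
      { rIn := R - R / (n + 2)
        rOut := R
        rIn_pos := by
          have h1 : R / (n + 2) < R := by
            apply div_lt_self hRpos
            have : (0:ℝ) ≤ (n:ℝ) := Nat.cast_nonneg n
            linarith
          linarith
        rIn_lt_rOut := by
          have : (0:ℝ) < R / (n + 2) := by positivity
          linarith } with hf
    have hf_zero : ∀ n x, x ∉ Ioo a b → (f n) x = 0 := by
      intro n x hx
      apply (f n).zero_of_le_dist
      rw [← hball] at hx
      simpa using not_lt.1 (fun h => hx (mem_ball.2 h))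
    have hf_tendsto : ∀ x, Tendsto (fun n => ((f n) x : ℝ)) atTop
        (𝓝 (indicator (Ioo a b) (fun _ => (1:ℝ)) x)) := by
      intro x
      by_cases hx : x ∈ Ioo a b
      · rw [indicator_of_mem hx]
        apply tendsto_const_nhds.congr'
        have hdist : dist x c < R := by rw [← hball] at hx; exact mem_ball.1 hx
        have hto : Tendsto (fun n : ℕ => R / (n + 2)) atTop (𝓝 0) := by
          apply Tendsto.div_atTop tendsto_const_nhds
          apply tendsto_atTop_add_const_right
          exact tendsto_natCast_atTop_atTop
        have hev : ∀ᶠ n : ℕ in atTop, R / ((n:ℝ) + 2) < R - dist x c :=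
          hto.eventually (gt_mem_nhds (by linarith))
        filter_upwards [hev] with n hn
        refine ((f n).one_of_mem_closedBall ?_).symm
        rw [mem_closedBall]
        show dist x c ≤ R - R / (n + 2)
        linarith
      · rw [indicator_of_notMem hx]
        simp_rw [fun n => hf_zero n x hx]
        exact tendsto_const_nhds
    have hdom : ∀ ρ : Measure ℝ, IsFiniteMeasure ρ →
        Tendsto (fun n => ∫ x, ((f n) x : ℝ) ∂ρ) atTop (𝓝 ((ρ (Ioo a b)).toReal)) := by
      intro ρ hρ
      have := tendsto_integral_of_dominated_convergence (μ := ρ)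
        (F := fun n x => ((f n) x : ℝ)) (f := indicator (Ioo a b) (fun _ => (1:ℝ)))
        (bound := fun _ => (1:ℝ))
        (fun n => ((f n).continuous).aestronglyMeasurable)
        (integrable_const 1)
        (fun n => by
          filter_upwards with x
          rw [Real.norm_eq_abs, _root_.abs_of_nonneg (f n).nonneg]
          exact (f n).le_one)
        (by filter_upwards with x using hf_tendsto x)
      rwa [show ∫ x, indicator (Ioo a b) (fun _ => (1:ℝ)) x ∂ρ = (ρ (Ioo a b)).toReal from
        integral_indicator_one measurableSet_Ioo] at this
    have hint_eq : ∀ n, ∫ x, ((f n) x : ℝ) ∂μ = ∫ x, ((f n) x : ℝ) ∂ν := by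
      intro n
      have := hS (bumpSchwartz (f n))
      simp_rw [bumpSchwartz_apply] at this
      apply Complex.ofReal_injective
      calc ((∫ x, ((f n) x : ℝ) ∂μ : ℝ) : ℂ)
          = ∫ x, (((f n) x : ℝ) : ℂ) ∂μ := integral_ofReal.symm
        _ = ∫ x, (((f n) x : ℝ) : ℂ) ∂ν := this
        _ = _ := integral_ofReal
    have h1 := hdom μ ‹_›
    have h2 := hdom ν ‹_›
    rw [funext hint_eq] at h1
    have := tendsto_nhds_unique h1 h2
    exact (ENNReal.toReal_eq_toReal_iff' (measure_ne_top μ _) (measure_ne_top ν _)).1 this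



lemma measure_eq_of_charFn_eq {μ ν : Measure ℝ} [IsFiniteMeasure μ] [IsFiniteMeasure ν]
    (hchar : ∀ s : ℝ, ∫ x, Complex.exp (↑s * I * ↑x) ∂μ = ∫ x, Complex.exp (↑s * I * ↑x) ∂ν) :
    μ = ν :=
  Real.measure_ext_Ioo_rat fun a b =>
    measure_Ioo_eq (schwartz_integral_eq hchar) a b

end MGFUniq

open MGFUniq in
/-- Two real random variables whose moment generating functions are finite and
agree on a common open interval `(-ε, ε)` around `0` have the same distribution. -/
theorem mgf_eq_on_interval_imp_law_eq {Ω Ω' : Type*}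
    [MeasurableSpace Ω] [MeasurableSpace Ω']
    (P : Measure Ω) (Q : Measure Ω')
    [IsProbabilityMeasure P] [IsProbabilityMeasure Q]
    (X : Ω → ℝ) (Y : Ω' → ℝ) (hX : Measurable X) (hY : Measurable Y)
    (ε : ℝ) (hε : 0 < ε)
    (hintX : ∀ t ∈ Set.Ioo (-ε) ε, Integrable (fun ω => Real.exp (t * X ω)) P)
    (hintY : ∀ t ∈ Set.Ioo (-ε) ε, Integrable (fun ω => Real.exp (t * Y ω)) Q)
    (heq : ∀ t ∈ Set.Ioo (-ε) ε, mgf X P t = mgf Y Q t) :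
    P.map X = Q.map Y := by
  set μ := P.map X with hμ
  set ν := Q.map Y with hν
  haveI : IsProbabilityMeasure μ := Measure.isProbabilityMeasure_map hX.aemeasurable
  haveI : IsProbabilityMeasure ν := Measure.isProbabilityMeasure_map hY.aemeasurable
  have hmeas : ∀ (t : ℝ) (ρ : Measure ℝ), AEStronglyMeasurable (fun x : ℝ => Real.exp (t * x)) ρ :=
    fun t ρ => (Real.continuous_exp.comp (continuous_const.mul continuous_id)).aestronglyMeasurable
  have hIntμ : ∀ t ∈ Set.Ioo (-ε) ε, Integrable (fun x => Real.exp (t * x)) μ := by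
    intro t ht
    rw [hμ, integrable_map_measure (hmeas t _) hX.aemeasurable]
    exact hintX t ht
  have hIntν : ∀ t ∈ Set.Ioo (-ε) ε, Integrable (fun x => Real.exp (t * x)) ν := by
    intro t ht
    rw [hν, integrable_map_measure (hmeas t _) hY.aemeasurable]
    exact hintY t ht
  have heq' : ∀ t ∈ Set.Ioo (-ε) ε, ∫ x, Real.exp (t * x) ∂μ = ∫ x, Real.exp (t * x) ∂ν := by
    intro t ht
    rw [hμ, hν, integral_map hX.aemeasurable (hmeas t _),
      integral_map hY.aemeasurable (hmeas t _)]
    simpa [mgf] using heq t ht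
  apply measure_eq_of_charFn_eq
  intro s
  exact charFn_eq hε hIntμ hIntν heq' s
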